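/- arXiv:1105.1616 — 3 statements merged into one kernel-verified Lean document; each statement's English description precedes it below -/
import Mathlib

section
/- Let α be real, and suppose |qα − a| < 1/q for coprime integers a, q with q ≥ 1. Let D be a positive integer with D² > q/4, and let z ∈ (0, 1/2]. Denote by W(D, z) the number of integers d with 1 ≤ d ≤ D and ‖d²α‖ ≤ z. Then for every ε > 0, W(D, z) ≪_ε D²/q + D^{1+ε} z^{1/2}. -/
/-- distance to the nearest integer -/
noncomputable def nid (x : ℝ) : ℝ := |x - round x|

lemma nid_nonneg (x : ℝ) : 0 ≤ nid x := abs_nonneg _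

lemma nid_le_int (x : ℝ) (k : ℤ) : nid x ≤ |x - k| := round_le x k

lemma nid_sub (x y : ℝ) : nid (x - y) ≤ nid x + nid y := by
  have h := nid_le_int (x - y) (round x - round y)
  refine h.trans ?_
  have : x - y - ((round x : ℤ) - (round y : ℤ) : ℤ) = (x - round x) - (y - round y) := by
    push_cast; ring
  rw [this]
  exact (abs_sub _ _)

/-- Core counting lemma -/
lemma core_count (α : ℝ) (a : ℤ) (q N : ℕ) (δ : ℝ) (hq : 1 ≤ q)
    (hcop : Int.gcd a q = 1) (hb : |(q : ℝ) * α - a| < 1 / q) (hδ : 0 ≤ δ)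
    (T : Finset ℕ) (hT : ∀ m ∈ T, m ≤ N ∧ nid ((m : ℝ) * α) ≤ δ) :
    (T.card : ℝ) ≤ ((N : ℝ) / q + 1) * (2 * q * δ + 3) := by
  classical
  have hq0 : (0 : ℝ) < q := by exact_mod_cast hq
  set b : ℝ := q * α - a with hbdef
  have hbq : |b| < 1 / q := hb
  -- the residue map
  set r : ℕ → ℤ := fun m => (m : ℤ) * a - q * round ((m : ℝ) * α) with hr
  have hrval : ∀ m : ℕ, (r m : ℝ) =
      q * ((m : ℝ) * α - round ((m : ℝ) * α)) - (m : ℝ) * b := by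
    intro m; simp only [hr]; push_cast; ring
  -- fiber bound
  have key : ∀ j : ℕ, ((T.filter fun m => m / q = j).card : ℝ) ≤ 2 * q * δ + 3 := by
    intro j
    set lo : ℤ := ⌈-((q * j : ℕ) : ℝ) * b - (q * δ + 1)⌉ with hlo
    set hi : ℤ := ⌊-((q * j : ℕ) : ℝ) * b + (q * δ + 1)⌋ with hhi
    have hmem : ∀ m ∈ T.filter fun m => m / q = j, r m ∈ Finset.Icc lo hi := by
      intro m hm
      rw [Finset.mem_filter] at hm
      obtain ⟨hmT, hmj⟩ := hm
      obtain ⟨hmN, hnid⟩ := hT m hmT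
      have hms : m = q * j + m % q := by
        conv_lhs => rw [← Nat.div_add_mod m q]
        rw [hmj]
      have hsq : ((m % q : ℕ) : ℝ) ≤ (q : ℝ) - 1 := by
        have h1 : m % q ≤ q - 1 := by
          have : m % q < q := Nat.mod_lt _ (by omega)
          omega
        have h2 : ((m % q : ℕ) : ℝ) ≤ ((q - 1 : ℕ) : ℝ) := by exact_mod_cast h1
        rwa [Nat.cast_sub hq, Nat.cast_one] at h2
      have habs : |(r m : ℝ) + ((q * j : ℕ) : ℝ) * b| ≤ q * δ + 1 := by
        have h1 : (r m : ℝ) + ((q * j : ℕ) : ℝ) * b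
            = q * ((m : ℝ) * α - round ((m : ℝ) * α)) - ((m % q : ℕ) : ℝ) * b := by
          rw [hrval]
          have : (m : ℝ) = ((q * j : ℕ) : ℝ) + ((m % q : ℕ) : ℝ) := by
            exact_mod_cast congrArg (Nat.cast (R := ℝ)) hms
          rw [this]; ring
        rw [h1]
        have h2 : |q * ((m : ℝ) * α - round ((m : ℝ) * α))| ≤ q * δ := by
          rw [abs_mul, abs_of_pos hq0]
          have : |(m : ℝ) * α - round ((m : ℝ) * α)| ≤ δ := hnid
          nlinarith
        have h3 : |((m % q : ℕ) : ℝ) * b| ≤ 1 := by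
          rw [abs_mul]
          have hb1 : |b| ≤ 1 / q := le_of_lt hbq
          have hmq0 : (0 : ℝ) ≤ ((m % q : ℕ) : ℝ) := Nat.cast_nonneg _
          have : ((m % q : ℕ) : ℝ) * |b| ≤ (q - 1) * (1 / q) := by
            apply mul_le_mul hsq hb1 (abs_nonneg _) (by linarith)
          calc |((m % q : ℕ) : ℝ)| * |b| = ((m % q : ℕ) : ℝ) * |b| := by
                rw [abs_of_nonneg hmq0]
            _ ≤ (q - 1) * (1 / q) := this
            _ ≤ 1 := by
                rw [sub_mul, mul_one_div, div_self (ne_of_gt hq0)]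
                have h9 : (0:ℝ) ≤ 1 * (1 / (q:ℝ)) := by positivity
                linarith
        calc |q * ((m : ℝ) * α - round ((m : ℝ) * α)) - ((m % q : ℕ) : ℝ) * b|
            ≤ |q * ((m : ℝ) * α - round ((m : ℝ) * α))| + |((m % q : ℕ) : ℝ) * b| :=
              abs_sub _ _
          _ ≤ q * δ + 1 := add_le_add h2 h3
      rw [Finset.mem_Icc]
      rw [abs_le] at habs
      push_cast at habs
      constructor
      · rw [hlo, Int.ceil_le]; push_cast; linarith [habs.1]
      · rw [hhi, Int.le_floor]; push_cast; linarith [habs.2]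
    have hinj : Set.InjOn r (T.filter fun m => m / q = j) := by
      intro m hm m' hm' heq
      rw [Finset.coe_filter, Set.mem_setOf_eq] at hm hm'
      have hdvd : (q : ℤ) ∣ ((m : ℤ) - m') * a := by
        have : ((m : ℤ) - m') * a = q * (round ((m : ℝ) * α) - round ((m' : ℝ) * α)) := by
          have := heq
          simp only [hr] at this
          linarith [this]
        exact ⟨_, this⟩
      have hco : Int.gcd (q : ℤ) a = 1 := by
        rw [Int.gcd_comm] at hcop
        simpa using hcop
      have hdvd2 : (q : ℤ) ∣ ((m : ℤ) - m') := by
        apply Int.dvd_of_dvd_mul_right_of_gcd_one (b := a)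
        · rwa [mul_comm] at hdvd
        · exact hco
      have hm1 : m % q < q := Nat.mod_lt _ (by omega)
      have hm2 : m' % q < q := Nat.mod_lt _ (by omega)
      have hj : m / q = m' / q := by rw [hm.2, hm'.2]
      have hme : m = q * (m' / q) + m % q := by
        rw [← hj]; exact (Nat.div_add_mod m q).symm
      have hme' : m' = q * (m' / q) + m' % q := (Nat.div_add_mod m' q).symm
      have habs2 : |(m : ℤ) - m'| < q := by
        rw [abs_lt]
        constructor <;> omega
      have : (m : ℤ) - m' = 0 := Int.eq_zero_of_abs_lt_dvd hdvd2 habs2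
      omega
    calc ((T.filter fun m => m / q = j).card : ℝ)
        ≤ ((Finset.Icc lo hi).card : ℝ) := by
          exact_mod_cast Finset.card_le_card_of_injOn r hmem hinj
      _ ≤ 2 * q * δ + 3 := by
          rw [Int.card_Icc]
          have h1 : (lo : ℝ) ≥ -((q * j : ℕ) : ℝ) * b - (q * δ + 1) := Int.le_ceil _
          have h2 : (hi : ℝ) ≤ -((q * j : ℕ) : ℝ) * b + (q * δ + 1) := Int.floor_le _
          have h3 : ((hi + 1 - lo).toNat : ℝ) ≤ ((hi : ℝ) + 1 - lo) ⊔ 0 := by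
            rcases le_or_gt (hi + 1 - lo) 0 with h | h
            · rw [Int.toNat_of_nonpos h]; simp
            · have h4 : (((hi + 1 - lo).toNat : ℤ) : ℝ) = ((hi + 1 - lo : ℤ) : ℝ) := by
                exact_mod_cast congrArg (Int.cast (R := ℝ)) (Int.toNat_of_nonneg h.le)
              push_cast at h4 ⊢
              rw [h4]
              exact le_max_left _ _
          refine h3.trans ?_
          rw [sup_le_iff]
          constructor
          · linarith
          · positivity
  -- sum over fibers
  have hcard : T.card = ∑ j ∈ Finset.range (N / q + 1), (T.filter fun m => m / q = j).card := by
    apply Finset.card_eq_sum_card_fiberwise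
    intro m hm
    simp only [Finset.mem_coe, Finset.mem_range]
    have := (hT m hm).1
    have : m / q ≤ N / q := Nat.div_le_div_right this
    omega
  have hmain : (T.card : ℝ) ≤ ((N / q + 1 : ℕ) : ℝ) * (2 * q * δ + 3) := by
    rw [hcard, Nat.cast_sum]
    calc ∑ j ∈ Finset.range (N / q + 1), ((T.filter fun m => m / q = j).card : ℝ)
        ≤ ∑ _j ∈ Finset.range (N / q + 1), (2 * q * δ + 3) :=
          Finset.sum_le_sum fun j _ => key j
      _ = ((N / q + 1 : ℕ) : ℝ) * (2 * q * δ + 3) := by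
          rw [Finset.sum_const, Finset.card_range, nsmul_eq_mul]
  refine hmain.trans ?_
  have hdiv : ((N / q : ℕ) : ℝ) ≤ (N : ℝ) / q := Nat.cast_div_le
  have hpos : (0 : ℝ) ≤ 2 * q * δ + 3 := by positivity
  have hc1 : ((N / q + 1 : ℕ) : ℝ) ≤ (N : ℝ) / q + 1 := by push_cast; linarith
  nlinarith



lemma two_rpow_gt_one {ε : ℝ} (hε : 0 < ε) : (1 : ℝ) < (2 : ℝ) ^ ε := by
  apply Real.one_lt_rpow_iff_of_pos (by norm_num) |>.2
  exact Or.inl ⟨by norm_num, hε⟩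

lemma div_bound (ε : ℝ) (hε : 0 < ε) :
    ∃ C : ℝ, 1 ≤ C ∧ ∀ n : ℕ, n ≠ 0 → (n.divisors.card : ℝ) ≤ C * (n : ℝ) ^ ε := by
  classical
  set c : ℝ := (2 : ℝ) ^ ε - 1 with hc
  have hc0 : 0 < c := by
    have := two_rpow_gt_one hε
    simp only [hc]; linarith
  set K : ℝ := max 1 (1 / c) with hK
  have hK1 : (1 : ℝ) ≤ K := le_max_left _ _
  have hKc : 1 ≤ K * c := by
    have h := mul_le_mul_of_nonneg_right (le_max_right 1 (1 / c)) hc0.le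
    rwa [one_div_mul_cancel (ne_of_gt hc0)] at h
  set B : ℕ := ⌈(2 : ℝ) ^ ((1 : ℝ) / ε)⌉₊ with hB
  refine ⟨K ^ (B + 1), one_le_pow₀ hK1, ?_⟩
  intro n hn
  -- the per-prime weight
  set w : ℕ → ℝ := fun p => if ((p : ℝ)) ^ ε < 2 then K else 1 with hw
  have hwnn : ∀ p, 0 < w p := by
    intro p; simp only [hw]; split <;> [linarith; norm_num]
  -- per-prime inequality
  have hkey : ∀ p ∈ n.primeFactors,
      ((n.factorization p + 1 : ℕ) : ℝ) ≤ w p * ((p : ℝ) ^ (n.factorization p : ℕ)) ^ ε := by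
    intro p hp
    have hpp : p.Prime := Nat.prime_of_mem_primeFactors hp
    have hp2 : (2 : ℝ) ≤ (p : ℝ) := by exact_mod_cast hpp.two_le
    have hp0 : (0 : ℝ) < (p : ℝ) := by linarith
    set e : ℕ := n.factorization p with he
    have hswap : ((p : ℝ) ^ (e : ℕ)) ^ ε = ((p : ℝ) ^ ε) ^ (e : ℕ) := by
      rw [← Real.rpow_natCast (p : ℝ) e, ← Real.rpow_mul hp0.le, mul_comm,
        Real.rpow_mul hp0.le, Real.rpow_natCast]
    rw [hswap]
    set y : ℝ := (p : ℝ) ^ ε with hy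
    have hy1 : 1 + c ≤ y := by
      have : (2 : ℝ) ^ ε ≤ (p : ℝ) ^ ε := Real.rpow_le_rpow (by norm_num) hp2 hε.le
      simp only [hy, hc]; linarith
    have hy0 : 0 ≤ y := by positivity
    simp only [hw]
    split
    · -- small prime: use Bernoulli
      rename_i hsmall
      have hbern : 1 + (e : ℝ) * c ≤ (1 + c) ^ (e : ℕ) := by
        have := one_add_mul_le_pow (a := c) (by linarith) e
        linarith
      have hpow : (1 + c) ^ (e : ℕ) ≤ y ^ (e : ℕ) :=
        pow_le_pow_left₀ (by linarith) hy1 e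
      have : ((e + 1 : ℕ) : ℝ) ≤ K * (1 + (e : ℝ) * c) := by
        push_cast
        have he0 : (0 : ℝ) ≤ (e : ℝ) := Nat.cast_nonneg _
        nlinarith
      refine this.trans ?_
      apply mul_le_mul_of_nonneg_left (hbern.trans hpow) (by linarith)
    · -- large prime : e + 1 ≤ 2^e ≤ y^e
      rename_i hbig
      push_neg at hbig
      have h2e : ((e + 1 : ℕ) : ℝ) ≤ (2 : ℝ) ^ (e : ℕ) := by
        have := Nat.lt_two_pow_self (n := e)
        exact_mod_cast this
      have : (2 : ℝ) ^ (e : ℕ) ≤ y ^ (e : ℕ) := pow_le_pow_left₀ (by norm_num) hbig e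
      rw [one_mul]
      exact h2e.trans this
  -- product over prime factors
  rw [Nat.card_divisors hn]
  have hcast : ((n.primeFactors.prod fun p => n.factorization p + 1 : ℕ) : ℝ)
      = n.primeFactors.prod fun p => ((n.factorization p + 1 : ℕ) : ℝ) := by
    push_cast; rfl
  rw [hcast]
  have hstep : (n.primeFactors.prod fun p => ((n.factorization p + 1 : ℕ) : ℝ))
      ≤ n.primeFactors.prod fun p => w p * ((p : ℝ) ^ (n.factorization p : ℕ)) ^ ε := by
    apply Finset.prod_le_prod
    · intro p _; positivity
    · exact hkey
  refine hstep.trans ?_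
  rw [Finset.prod_mul_distrib]
  -- second factor equals n ^ ε
  have hbase : (n.primeFactors.prod fun p => ((p : ℕ) : ℝ) ^ (n.factorization p : ℕ))
      = (n : ℝ) := by
    have h1 : (n.primeFactors.prod fun p => p ^ n.factorization p) = n := by
      have h2 := Nat.factorization_prod_pow_eq_self hn
      rwa [Finsupp.prod, Nat.support_factorization] at h2
    exact_mod_cast congrArg (Nat.cast (R := ℝ)) h1
  have hn2 : (n.primeFactors.prod fun p => ((p : ℝ) ^ (n.factorization p : ℕ)) ^ ε)
      = (n : ℝ) ^ ε := by
    rw [Real.finset_prod_rpow _ _ (fun p _ => by positivity) ε, hbase]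
  rw [hn2]
  -- the weight product
  have hwprod : (n.primeFactors.prod fun p => w p) ≤ K ^ (B + 1) := by
    have h1 : (n.primeFactors.prod fun p => w p)
        = K ^ (n.primeFactors.filter fun p : ℕ => (p : ℝ) ^ ε < 2).card := by
      rw [← Finset.prod_filter_mul_prod_filter_not n.primeFactors
        (fun p : ℕ => (p : ℝ) ^ ε < 2) w]
      have e1 : (n.primeFactors.filter fun p : ℕ => (p : ℝ) ^ ε < 2).prod w
          = K ^ (n.primeFactors.filter fun p : ℕ => (p : ℝ) ^ ε < 2).card := by
        rw [Finset.prod_congr rfl (fun p hp => ?_), Finset.prod_const]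
        rw [Finset.mem_filter] at hp
        simp only [hw, if_pos hp.2]
      have e2 : (n.primeFactors.filter fun p : ℕ => ¬ (p : ℝ) ^ ε < 2).prod w = 1 := by
        apply Finset.prod_eq_one
        intro p hp
        rw [Finset.mem_filter] at hp
        simp only [hw, if_neg hp.2]
      rw [e1, e2, mul_one]
    rw [h1]
    apply pow_le_pow_right₀ hK1
    have hsub : (n.primeFactors.filter fun p : ℕ => (p : ℝ) ^ ε < 2) ⊆ Finset.range (B + 1) := by
      intro p hp
      rw [Finset.mem_filter] at hp
      rw [Finset.mem_range]
      have hp0 : (0 : ℝ) ≤ (p : ℝ) := Nat.cast_nonneg _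
      have h3 : ((p : ℝ) ^ ε) ^ ((1 : ℝ) / ε) < (2 : ℝ) ^ ((1 : ℝ) / ε) :=
        Real.rpow_lt_rpow (by positivity) hp.2 (by positivity)
      have h4 : ((p : ℝ) ^ ε) ^ ((1 : ℝ) / ε) = (p : ℝ) := by
        rw [← Real.rpow_mul hp0, mul_one_div_cancel (ne_of_gt hε), Real.rpow_one]
      have h5 : (p : ℝ) < (B : ℝ) + 1 := by
        have h6 : (2 : ℝ) ^ ((1 : ℝ) / ε) ≤ (B : ℝ) := Nat.le_ceil _
        rw [h4] at h3; linarith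
      exact_mod_cast h5
    calc (n.primeFactors.filter fun p : ℕ => (p : ℝ) ^ ε < 2).card
        ≤ (Finset.range (B + 1)).card := Finset.card_le_card hsub
      _ = B + 1 := Finset.card_range _
  apply mul_le_mul_of_nonneg_right hwprod (Real.rpow_nonneg (Nat.cast_nonneg _) _)

lemma auxWs (W s X : ℝ) (h : W ^ 2 ≤ W + X) (hs2 : s ^ 2 = X) (hs0 : 0 ≤ s) : W ≤ 1 + s := by
  by_contra hcon
  push_neg at hcon
  nlinarith [sq_nonneg (W - 1 - s)]

lemma auxA (C₀ Dε v : ℝ) (hC : 1 ≤ C₀) (hD : 1 ≤ Dε) (hv : 0 ≤ v) :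
    40 * C₀ * Dε * (v ^ 2) ≤ (7 * C₀ * Dε * v) ^ 2 := by
  have hP : 1 ≤ C₀ * Dε := by nlinarith
  have hPv : (0:ℝ) ≤ (C₀ * Dε) * v ^ 2 :=
    mul_nonneg (by linarith) (sq_nonneg v)
  have h2 := mul_le_mul_of_nonneg_right hP hPv
  nlinarith [h2]

lemma auxB (C₀ Dε t v : ℝ) (hC : 1 ≤ C₀) (hD : 1 ≤ Dε) (ht : 0 < t) (hv : 1 < v) :
    30 * C₀ * Dε * t ≤ (6 * C₀ * (t + Dε * v)) ^ 2 := by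
  have hC0 : (0:ℝ) ≤ C₀ := by linarith
  have hDε0 : (0:ℝ) < Dε := by linarith
  have hv0 : (0:ℝ) < v := lt_trans zero_lt_one hv
  have h4 : Dε * 1 ≤ Dε * v := mul_le_mul_of_nonneg_left hv.le hDε0.le
  rw [mul_one] at h4
  have h5 : t * Dε ≤ t * (Dε * v) := mul_le_mul_of_nonneg_left h4 ht.le
  have hq1 : 4 * (t * (Dε * v)) ≤ (t + Dε * v) ^ 2 := by nlinarith [sq_nonneg (t - Dε * v)]
  have hCsq : C₀ ≤ C₀ ^ 2 := by nlinarith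
  have hstep1 : 30 * C₀ * Dε * t ≤ 36 * C₀ * (4 * (t * Dε)) := by
    have hpos : (0:ℝ) ≤ C₀ * (t * Dε) := mul_nonneg hC0 (mul_nonneg ht.le hDε0.le)
    nlinarith [hpos]
  have hstep2 : 36 * C₀ * (4 * (t * Dε)) ≤ 36 * C₀ * (4 * (t * (Dε * v))) := by
    have h6 := mul_le_mul_of_nonneg_left h5 (by linarith : (0:ℝ) ≤ 36 * C₀)
    nlinarith [h6]
  have hstep3 : 36 * C₀ * (4 * (t * (Dε * v))) ≤ 36 * C₀ * ((t + Dε * v) ^ 2) := by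
    have h7 := mul_le_mul_of_nonneg_left hq1 (by linarith : (0:ℝ) ≤ 36 * C₀)
    nlinarith [h7]
  have hstep4 : 36 * C₀ * ((t + Dε * v) ^ 2) ≤ (6 * C₀ * (t + Dε * v)) ^ 2 := by
    have h8 := mul_le_mul_of_nonneg_right hCsq (sq_nonneg (t + Dε * v))
    nlinarith [h8]
  linarith

lemma auxSq (a b x : ℝ) (ha : 0 ≤ a) (hb : 0 ≤ b) (hx : x ≤ a ^ 2 + b ^ 2) :
    x ≤ (a + b) ^ 2 := by
  nlinarith [mul_nonneg ha hb]

set_option maxHeartbeats 4000000 in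
theorem stmt3 (ε : ℝ) (hε : 0 < ε) :
    ∃ C : ℝ, 0 < C ∧ ∀ (α : ℝ) (a : ℤ) (q D : ℕ) (z : ℝ),
      1 ≤ q → Int.gcd a q = 1 → |(q : ℝ) * α - a| < 1 / q →
      1 ≤ D → (q : ℝ) / 4 < (D : ℝ) ^ 2 → 0 < z → z ≤ 1 / 2 →
      (((Finset.Icc 1 D).filter (fun d : ℕ => nid ((d : ℝ) ^ 2 * α) ≤ z)).card : ℝ)
        ≤ C * ((D : ℝ) ^ 2 / q + (D : ℝ) ^ (1 + ε) * z ^ ((1 : ℝ) / 2)) := by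
  classical
  obtain ⟨C₀, hC₀1, hC₀⟩ := div_bound (ε / 2) (by linarith)
  refine ⟨100 * C₀, by linarith, ?_⟩
  intro α a q D z hq hcop hb hD hq4 hz0 hz2
  set S := (Finset.Icc 1 D).filter (fun d : ℕ => nid ((d : ℝ) ^ 2 * α) ≤ z) with hSdef
  set W : ℝ := (S.card : ℝ) with hWdef
  have hW0 : 0 ≤ W := Nat.cast_nonneg _
  have hq0R : (0 : ℝ) < q := by exact_mod_cast hq
  have hD0R : (0 : ℝ) < D := by exact_mod_cast hD
  have hD1R : (1 : ℝ) ≤ D := by exact_mod_cast hD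
  have hq4R : (q : ℝ) < 4 * (D : ℝ) ^ 2 := by linarith
  set t : ℝ := (D : ℝ) ^ 2 / q with htdef
  have ht0 : 0 < t := by positivity
  have ht14 : 1 ≤ 4 * t := by
    rw [htdef, ← mul_div_assoc]
    exact (one_le_div hq0R).2 (by linarith)
  have htq : t * q = (D : ℝ) ^ 2 := div_mul_cancel₀ _ (ne_of_gt hq0R)
  set u : ℝ := Real.sqrt z with hudef
  have hu0 : 0 < u := Real.sqrt_pos.2 hz0
  have hu2 : u ^ 2 = z := Real.sq_sqrt hz0.le
  set Dε : ℝ := (D : ℝ) ^ (ε : ℝ) with hDεdef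
  have hDε1 : 1 ≤ Dε := Real.one_le_rpow hD1R hε.le
  have hDε0 : 0 < Dε := by linarith
  have hzu : z ^ ((1 : ℝ) / 2) = u := by rw [hudef, Real.sqrt_eq_rpow]
  have hpow : (D : ℝ) ^ ((1 : ℝ) + ε) = (D : ℝ) * Dε := by
    rw [Real.rpow_add hD0R, Real.rpow_one]
  -- membership facts for S
  have hSmem : ∀ d ∈ S, 1 ≤ d ∧ d ≤ D ∧ nid ((d : ℝ) ^ 2 * α) ≤ z := by
    intro d hd
    rw [hSdef, Finset.mem_filter, Finset.mem_Icc] at hd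
    exact ⟨hd.1.1, hd.1.2, hd.2⟩
  -- Bound 1 : W ≤ (t+1)(2qz+3)
  have hBound1 : W ≤ (t + 1) * (2 * q * z + 3) := by
    have hinj : Function.Injective (fun m : ℕ => m ^ 2) :=
      fun x y h => Nat.pow_left_injective (by norm_num) h
    have hcard : (S.image fun d => d ^ 2).card = S.card :=
      Finset.card_image_of_injective _ hinj
    have hcc := core_count α a q (D ^ 2) z hq hcop hb hz0.le (S.image fun d => d ^ 2) ?_
    · rw [hcard] at hcc
      refine hcc.trans_eq ?_
      rw [htdef]
      push_cast
      ring
    · intro m hm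
      rw [Finset.mem_image] at hm
      obtain ⟨d, hd, rfl⟩ := hm
      obtain ⟨hd1, hdD, hnid⟩ := hSmem d hd
      constructor
      · exact Nat.pow_le_pow_left hdD 2
      · have : ((d ^ 2 : ℕ) : ℝ) = (d : ℝ) ^ 2 := by push_cast; ring
        rw [this]
        exact hnid
  -- Bound 2 : W^2 ≤ W + 2 C₀ Dε (t+1)(4qz+3)
  have hBound2 : W ^ 2 ≤ W + 2 * C₀ * Dε * ((t + 1) * (4 * q * z + 3)) := by
    set M := (Finset.Icc 1 (D ^ 2)).filter (fun n : ℕ => nid ((n : ℝ) * α) ≤ 2 * z) with hMdef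
    have hM : (M.card : ℝ) ≤ (t + 1) * (4 * q * z + 3) := by
      have hcc := core_count α a q (D ^ 2) (2 * z) hq hcop hb (by linarith) M ?_
      · refine hcc.trans_eq ?_
        rw [htdef]; push_cast; ring
      · intro m hm
        rw [hMdef, Finset.mem_filter, Finset.mem_Icc] at hm
        exact ⟨hm.1.2, hm.2⟩
    set off := (S ×ˢ S).filter (fun p : ℕ × ℕ => p.1 ≠ p.2) with hoffdef
    set f : ℕ × ℕ → ℕ := fun p => (max p.1 p.2) ^ 2 - (min p.1 p.2) ^ 2 with hfdef
    -- structural facts about an off-diagonal pair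
    have hoffmem : ∀ p ∈ off, p.1 ∈ S ∧ p.2 ∈ S ∧ p.1 ≠ p.2 := by
      intro p hp
      rw [hoffdef, Finset.mem_filter, Finset.mem_product] at hp
      exact ⟨hp.1.1, hp.1.2, hp.2⟩
    have hkeyid : ∀ p ∈ off, (max p.1 p.2 - min p.1 p.2) * (max p.1 p.2 + min p.1 p.2) = f p
        ∧ 1 ≤ f p ∧ f p ≤ D ^ 2 := by
      intro p hp
      obtain ⟨h1, h2, hne⟩ := hoffmem p hp
      obtain ⟨ha1, haD, -⟩ := hSmem _ h1
      obtain ⟨hb1, hbD, -⟩ := hSmem _ h2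
      set Mx := max p.1 p.2
      set mn := min p.1 p.2
      have hmn : mn < Mx := by
        simp only [Mx, mn]
        rcases Nat.lt_or_ge p.1 p.2 with h | h
        · rw [max_eq_right h.le, min_eq_left h.le]; exact h
        · have : p.2 < p.1 := by omega
          rw [max_eq_left h, min_eq_right h]; exact this
      have hMxD : Mx ≤ D := by simp only [Mx]; omega
      have hmn1 : 1 ≤ mn := by simp only [mn]; omega
      have hid : (Mx - mn) * (Mx + mn) = Mx ^ 2 - mn ^ 2 := by
        cases' Nat.le.dest hmn.le with k hk
        have h5 : Mx - mn = k := by omega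
        have h6 : Mx = mn + k := hk.symm
        have hx : (mn + k) ^ 2 = mn ^ 2 + k * (mn + k + mn) := by ring
        rw [h5, h6, hx, Nat.add_sub_cancel_left]
      have hlt : mn ^ 2 < Mx ^ 2 := Nat.pow_lt_pow_left hmn (by norm_num)
      have hle : Mx ^ 2 ≤ D ^ 2 := Nat.pow_le_pow_left hMxD 2
      exact ⟨hid, Nat.sub_pos_of_lt hlt, le_trans (Nat.sub_le _ _) hle⟩
    -- image of f lies in M
    have himage : ∀ p ∈ off, f p ∈ M := by
      intro p hp
      obtain ⟨h1, h2, hne⟩ := hoffmem p hp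
      obtain ⟨-, hf1, hf2⟩ := hkeyid p hp
      rw [hMdef, Finset.mem_filter, Finset.mem_Icc]
      refine ⟨⟨hf1, hf2⟩, ?_⟩
      obtain ⟨-, -, hna⟩ := hSmem _ h1
      obtain ⟨-, -, hnb⟩ := hSmem _ h2
      have hcast : ((f p : ℕ) : ℝ) = ((max p.1 p.2 : ℕ) : ℝ) ^ 2 - ((min p.1 p.2 : ℕ) : ℝ) ^ 2 := by
        simp only [hfdef]
        have : (min p.1 p.2) ^ 2 ≤ (max p.1 p.2) ^ 2 :=
          Nat.pow_le_pow_left (min_le_max) 2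
        push_cast [this]
        ring
      have hmax : nid (((max p.1 p.2 : ℕ) : ℝ) ^ 2 * α) ≤ z := by
        rcases max_choice p.1 p.2 with h | h <;> rw [h]
        · exact hna
        · exact hnb
      have hmin : nid (((min p.1 p.2 : ℕ) : ℝ) ^ 2 * α) ≤ z := by
        rcases min_choice p.1 p.2 with h | h <;> rw [h]
        · exact hna
        · exact hnb
      have : ((f p : ℕ) : ℝ) * α
          = ((max p.1 p.2 : ℕ) : ℝ) ^ 2 * α - ((min p.1 p.2 : ℕ) : ℝ) ^ 2 * α := by
        rw [hcast]; ring
      rw [this]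
      calc nid _ ≤ nid (((max p.1 p.2 : ℕ) : ℝ) ^ 2 * α) + nid (((min p.1 p.2 : ℕ) : ℝ) ^ 2 * α) :=
            nid_sub _ _
        _ ≤ 2 * z := by linarith
    -- fiber bound
    have hfiber : ∀ n ∈ off.image f, ((off.filter fun p => f p = n).card : ℕ) ≤ 2 * n.divisors.card := by
      intro n hn
      rw [Finset.mem_image] at hn
      obtain ⟨p₀, hp₀, hfp₀⟩ := hn
      have hn0 : n ≠ 0 := by
        have := (hkeyid p₀ hp₀).2.1
        omega
      set g : ℕ × ℕ → ℕ × Bool := fun p => (max p.1 p.2 - min p.1 p.2, decide (p.1 < p.2)) with hgdef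
      have hmaps : ∀ p ∈ off.filter fun p => f p = n, g p ∈ n.divisors ×ˢ (Finset.univ : Finset Bool) := by
        intro p hp
        rw [Finset.mem_filter] at hp
        obtain ⟨hid, hf1, -⟩ := hkeyid p hp.1
        rw [Finset.mem_product, Nat.mem_divisors]
        refine ⟨⟨⟨max p.1 p.2 + min p.1 p.2, ?_⟩, hn0⟩, Finset.mem_univ _⟩
        rw [← hp.2, ← hid]
      have hinj : Set.InjOn g (off.filter fun p => f p = n) := by
        intro p hp p' hp' heq
        rw [Finset.coe_filter, Set.mem_setOf_eq] at hp hp'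
        obtain ⟨hid, hf1, -⟩ := hkeyid p hp.1
        obtain ⟨hid', hf1', -⟩ := hkeyid p' hp'.1
        obtain ⟨-, -, hne⟩ := hoffmem p hp.1
        obtain ⟨-, -, hne'⟩ := hoffmem p' hp'.1
        have hu : max p.1 p.2 - min p.1 p.2 = max p'.1 p'.2 - min p'.1 p'.2 := congrArg Prod.fst heq
        have hbit : (p.1 < p.2) ↔ (p'.1 < p'.2) := by
          have := congrArg Prod.snd heq
          simp only [hgdef] at this
          exact decide_eq_decide.mp this
        have hueq : (max p.1 p.2 - min p.1 p.2) * (max p.1 p.2 + min p.1 p.2)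
            = (max p.1 p.2 - min p.1 p.2) * (max p'.1 p'.2 + min p'.1 p'.2) := by
          rw [hid, hu, hid', hp.2, hp'.2]
        have hu0' : 0 < max p.1 p.2 - min p.1 p.2 := by
          have : min p.1 p.2 < max p.1 p.2 := by omega
          omega
        have hsum : max p.1 p.2 + min p.1 p.2 = max p'.1 p'.2 + min p'.1 p'.2 :=
          Nat.eq_of_mul_eq_mul_left hu0' hueq
        have hPeq : p.1 = p'.1 ∧ p.2 = p'.2 := by
          rcases Nat.lt_or_ge p.1 p.2 with h | h
          · have h' : p'.1 < p'.2 := hbit.mp h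
            rw [max_eq_right h.le, min_eq_left h.le] at hu hsum
            rw [max_eq_right h'.le, min_eq_left h'.le] at hu hsum
            omega
          · have h' : ¬ p'.1 < p'.2 := fun hc => by
              have := hbit.mpr hc; omega
            push_neg at h'
            rw [max_eq_left h, min_eq_right h] at hu hsum
            rw [max_eq_left h', min_eq_right h'] at hu hsum
            omega
        exact Prod.ext hPeq.1 hPeq.2
      calc (off.filter fun p => f p = n).card
          ≤ (n.divisors ×ˢ (Finset.univ : Finset Bool)).card :=
            Finset.card_le_card_of_injOn g hmaps hinj
        _ = 2 * n.divisors.card := by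
            rw [Finset.card_product, Finset.card_univ]
            simp [mul_comm]
      -- fiber bound end
    -- off.card bound
    have hoffcard : (off.card : ℝ) ≤ (M.card : ℝ) * (2 * C₀ * Dε) := by
      have hsum : off.card = ∑ n ∈ off.image f, (off.filter fun p => f p = n).card :=
        Finset.card_eq_sum_card_fiberwise fun p hp => Finset.mem_image_of_mem f hp
      have hτ : ∀ n ∈ off.image f, ((off.filter fun p => f p = n).card : ℝ) ≤ 2 * C₀ * Dε := by
        intro n hn
        have h1 : ((off.filter fun p => f p = n).card : ℝ) ≤ 2 * (n.divisors.card : ℝ) := by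
          exact_mod_cast hfiber n hn
        refine h1.trans ?_
        rw [Finset.mem_image] at hn
        obtain ⟨p₀, hp₀, hfp₀⟩ := hn
        have hn0 : n ≠ 0 := by have := (hkeyid p₀ hp₀).2.1; omega
        have hnD : n ≤ D ^ 2 := hfp₀ ▸ (hkeyid p₀ hp₀).2.2
        have h2 : (n.divisors.card : ℝ) ≤ C₀ * (n : ℝ) ^ (ε / 2) := hC₀ n hn0
        have h3 : (n : ℝ) ^ (ε / 2) ≤ ((D : ℝ) ^ 2) ^ (ε / 2) := by
          apply Real.rpow_le_rpow (Nat.cast_nonneg _) ?_ (by linarith)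
          have : ((n : ℕ) : ℝ) ≤ ((D ^ 2 : ℕ) : ℝ) := by exact_mod_cast hnD
          push_cast at this
          linarith
        have h4 : ((D : ℝ) ^ 2) ^ (ε / 2) = Dε := by
          rw [hDεdef, ← Real.rpow_natCast (D : ℝ) 2, ← Real.rpow_mul hD0R.le]
          congr 1
          push_cast
          ring
        rw [h4] at h3
        have : (n.divisors.card : ℝ) ≤ C₀ * Dε := h2.trans (by nlinarith)
        linarith
      calc (off.card : ℝ) = ∑ n ∈ off.image f, ((off.filter fun p => f p = n).card : ℝ) := by
            rw [hsum]; push_cast; rfl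
        _ ≤ ∑ _n ∈ off.image f, (2 * C₀ * Dε) := Finset.sum_le_sum hτ
        _ = ((off.image f).card : ℝ) * (2 * C₀ * Dε) := by
            rw [Finset.sum_const, nsmul_eq_mul]
        _ ≤ (M.card : ℝ) * (2 * C₀ * Dε) := by
            have hsub : off.image f ⊆ M := by
              intro n hn
              rw [Finset.mem_image] at hn
              obtain ⟨p, hp, rfl⟩ := hn
              exact himage p hp
            have := Finset.card_le_card hsub
            have hcc : ((off.image f).card : ℝ) ≤ (M.card : ℝ) := by exact_mod_cast this
            apply mul_le_mul_of_nonneg_right hcc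
            positivity
    -- diagonal
    have hdiag : ((S ×ˢ S).filter (fun p : ℕ × ℕ => p.1 = p.2)).card ≤ S.card := by
      apply Finset.card_le_card_of_injOn (fun p => p.1)
      · intro p hp
        rw [Finset.mem_coe, Finset.mem_filter, Finset.mem_product] at hp
        exact hp.1.1
      · intro p hp p' hp' heq
        rw [Finset.coe_filter, Set.mem_setOf_eq] at hp hp'
        exact Prod.ext heq (by rw [← hp.2, ← hp'.2]; exact heq)
    have hsplit : ((S ×ˢ S).filter (fun p : ℕ × ℕ => p.1 = p.2)).card + off.card
        = S.card * S.card := by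
      rw [hoffdef]
      rw [Finset.card_filter_add_card_filter_not, Finset.card_product]
    have : W ^ 2 ≤ W + (off.card : ℝ) := by
      have h1 : (S.card * S.card : ℕ) = ((S ×ˢ S).filter (fun p : ℕ × ℕ => p.1 = p.2)).card + off.card := hsplit.symm
      have h2 : W ^ 2 = ((S.card * S.card : ℕ) : ℝ) := by rw [hWdef]; push_cast; ring
      rw [h2, h1]
      push_cast
      have : (((S ×ˢ S).filter (fun p : ℕ × ℕ => p.1 = p.2)).card : ℝ) ≤ W := by
        rw [hWdef]; exact_mod_cast hdiag
      linarith
    calc W ^ 2 ≤ W + (off.card : ℝ) := this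
      _ ≤ W + (M.card : ℝ) * (2 * C₀ * Dε) := by linarith
      _ ≤ W + 2 * C₀ * Dε * ((t + 1) * (4 * q * z + 3)) := by
          have h9 : (0:ℝ) ≤ 2 * C₀ * Dε := by positivity
          have h10 := mul_le_mul_of_nonneg_right hM h9
          linarith
  -- now the case analysis
  rw [hzu, hpow]
  have hDu0 : (0:ℝ) < (D : ℝ) * u := mul_pos hD0R hu0
  have hDεDu0 : (0:ℝ) < Dε * ((D:ℝ) * u) := mul_pos hDε0 hDu0
  have hqz0 : (0:ℝ) ≤ (q:ℝ) * z := by positivity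
  have hqz4 : (q : ℝ) * z ≤ 4 * ((D : ℝ) * u) ^ 2 := by
    have h1 := mul_le_mul_of_nonneg_right hq4R.le hz0.le
    have h2 : 4 * ((D : ℝ) * u) ^ 2 = 4 * (D:ℝ) ^ 2 * z := by
      rw [mul_pow, hu2]; ring
    rw [h2]; exact h1
  have hqzt : t * ((q : ℝ) * z) = ((D : ℝ) * u) ^ 2 := by
    have h1 : t * ((q : ℝ) * z) = (t * q) * z := by ring
    rw [h1, htq, mul_pow, hu2]
  by_cases hcase : (D : ℝ) * u ≤ Dε
  · -- small z case
    have h3 := mul_le_mul_of_nonneg_right hcase hDu0.le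
    have h2 : ((D : ℝ) * u) ^ 2 ≤ Dε * ((D : ℝ) * u) := by rw [pow_two]; exact h3
    have hx : (t + 1) * (2 * q * z + 3) = 2 * (t * (q * z)) + 3 * t + 2 * (q * z) + 3 := by ring
    rw [hx, hqzt] at hBound1
    have h5 : W ≤ 10 * (Dε * ((D:ℝ) * u)) + 15 * t := by
      linarith only [hBound1, hqz4, h2, ht14]
    have k1 : t ≤ C₀ * t := (mul_le_mul_of_nonneg_right hC₀1 ht0.le).trans_eq' (one_mul t)
    have k2 : Dε * ((D:ℝ) * u) ≤ C₀ * (Dε * ((D:ℝ) * u)) :=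
      (mul_le_mul_of_nonneg_right hC₀1 hDεDu0.le).trans_eq' (one_mul _)
    have e1 : 100 * C₀ * (t + (D:ℝ) * Dε * u) = 100 * (C₀ * t) + 100 * (C₀ * (Dε * ((D:ℝ) * u))) := by
      ring
    rw [e1]
    linarith only [h5, k1, k2, ht0, hDεDu0]
  · -- large z case
    push_neg at hcase
    have hDu1 : 1 < (D : ℝ) * u := lt_of_le_of_lt hDε1 hcase
    set X : ℝ := 2 * C₀ * Dε * ((t + 1) * (4 * q * z + 3)) with hXdef
    have hX0 : 0 ≤ X := by
      rw [hXdef]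
      have h1 : (0:ℝ) ≤ (t + 1) * (4 * q * z + 3) := by
        have := mul_nonneg (by linarith only [ht0] : (0:ℝ) ≤ t + 1)
          (by linarith only [hqz0] : (0:ℝ) ≤ 4 * ((q:ℝ) * z) + 3)
        linarith only [this]
      have h2 : (0:ℝ) ≤ 2 * C₀ * Dε := by positivity
      nlinarith [mul_nonneg h2 h1]
    set s : ℝ := Real.sqrt X with hsdef
    have hs0 : 0 ≤ s := Real.sqrt_nonneg _
    have hs2 : s ^ 2 = X := Real.sq_sqrt hX0
    have hWX : W ^ 2 ≤ W + X := by rw [hXdef]; exact hBound2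
    have hWs : W ≤ 1 + s := auxWs W s X hWX hs2 hs0
    set A : ℝ := 7 * C₀ * Dε * ((D : ℝ) * u) with hAdef
    set B : ℝ := 6 * C₀ * (t + Dε * ((D : ℝ) * u)) with hBdef
    have hA0 : 0 ≤ A := by
      rw [hAdef]; positivity
    have hB0 : 0 ≤ B := by
      rw [hBdef]
      have h1 : (0:ℝ) ≤ t + Dε * ((D:ℝ) * u) := by linarith only [ht0, hDεDu0]
      positivity
    have hXY : X ≤ (A + B) ^ 2 := by
      apply auxSq A B X hA0 hB0
      have hXexp : X ≤ 40 * C₀ * Dε * (((D : ℝ) * u) ^ 2) + 30 * C₀ * Dε * t := by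
        have hexp : (t + 1) * (4 * q * z + 3) = 4 * (t * (q * z)) + 3 * t + 4 * (q * z) + 3 := by ring
        rw [hXdef, hexp, hqzt]
        have hinner : 4*((D:ℝ)*u)^2 + 3*t + 4*((q:ℝ)*z) + 3 ≤ 20*((D:ℝ)*u)^2 + 15*t := by
          linarith only [hqz4, ht14]
        have hnn : (0:ℝ) ≤ 2*C₀*Dε := by positivity
        have h11 := mul_le_mul_of_nonneg_left hinner hnn
        linarith only [h11]
      refine hXexp.trans ?_
      have hA2 : 40 * C₀ * Dε * (((D : ℝ) * u) ^ 2) ≤ A ^ 2 := by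
        rw [hAdef]; exact auxA C₀ Dε ((D:ℝ)*u) hC₀1 hDε1 hDu0.le
      have hB2 : 30 * C₀ * Dε * t ≤ B ^ 2 := by
        rw [hBdef]; exact auxB C₀ Dε t ((D:ℝ)*u) hC₀1 hDε1 ht0 hDu1
      linarith only [hA2, hB2]
    have hsY : s ≤ A + B := by
      rw [hsdef]
      calc Real.sqrt X ≤ Real.sqrt ((A + B) ^ 2) := Real.sqrt_le_sqrt hXY
        _ = A + B := Real.sqrt_sq (by linarith only [hA0, hB0])
    have hWY : W ≤ 1 + A + B := by linarith only [hWs, hsY]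
    rw [hAdef, hBdef] at hWY
    have k1 : t ≤ C₀ * t := (mul_le_mul_of_nonneg_right hC₀1 ht0.le).trans_eq' (one_mul t)
    have k2 : Dε * ((D:ℝ) * u) ≤ C₀ * (Dε * ((D:ℝ) * u)) :=
      (mul_le_mul_of_nonneg_right hC₀1 hDεDu0.le).trans_eq' (one_mul _)
    have k3 : (1:ℝ) ≤ 4 * (C₀ * t) := by linarith only [ht14, k1, ht0]
    have e1 : 100 * C₀ * (t + (D:ℝ) * Dε * u) = 100 * (C₀ * t) + 100 * (C₀ * (Dε * ((D:ℝ) * u))) := by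
      ring
    rw [e1]
    have k5 : 7 * C₀ * Dε * ((D:ℝ) * u) = 7 * (C₀ * (Dε * ((D:ℝ) * u))) := by ring
    have k6 : 6 * C₀ * (t + Dε * ((D:ℝ) * u)) = 6 * (C₀ * t) + 6 * (C₀ * (Dε * ((D:ℝ) * u))) := by
      ring
    rw [k5, k6] at hWY
    have k7 : (0:ℝ) < C₀ * (Dε * ((D:ℝ) * u)) :=
      mul_pos (lt_of_lt_of_le one_pos hC₀1) hDεDu0
    linarith only [hWY, k3, k7]
end

section
/- Let α be real, a, q integers with q ≥ 1, gcd(a, q) = 1 and |α − a/q| ≤ q⁻². Let D be a positive integer with D ≤ q^{1/2}/4. Then Σ_{D ≤ d < 2D} ‖αd²‖⁻¹ ≪ q log q. -/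
lemma nid_term_bound {x : ℝ} {m : ℤ} {q r : ℕ} (hq : 0 < q) (hr0 : 0 < r) (hrq : r < q)
    (hmod : m % (q : ℤ) = (r : ℤ)) (hx : |x - (m : ℝ) / q| ≤ 1 / (4 * q)) :
    (nid x)⁻¹ ≤ 2 * q * ((r : ℝ)⁻¹ + ((q : ℝ) - r)⁻¹) := by
  have hqR : (0 : ℝ) < q := by exact_mod_cast hq
  have hrR : (0 : ℝ) < r := by exact_mod_cast hr0
  have hrqR : (r : ℝ) < q := by exact_mod_cast hrq
  have hqrR : (0 : ℝ) < (q : ℝ) - r := by linarith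
  set k := round x with hk
  set t : ℤ := m - k * q with htdef
  have htmod : t % (q : ℤ) = (r : ℤ) := by
    rw [htdef, Int.sub_emod, Int.mul_emod_left, sub_zero, Int.emod_emod_of_dvd _ dvd_rfl, hmod]
  have htq : t = (q : ℤ) * (t / q) + r := by
    have h := Int.mul_ediv_add_emod t q
    rw [htmod] at h
    linarith
  set M : ℝ := min (r : ℝ) ((q : ℝ) - r) with hM
  have hMpos : 0 < M := lt_min hrR hqrR
  have hM1 : 1 ≤ M := by
    have h1 : (1 : ℝ) ≤ r := by exact_mod_cast hr0
    have h2 : (1 : ℝ) ≤ (q : ℝ) - r := by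
      have : (r : ℕ) + 1 ≤ q := hrq
      have : ((r : ℕ) : ℝ) + 1 ≤ q := by exact_mod_cast this
      linarith
    exact le_min h1 h2
  have habs : M ≤ |(t : ℝ)| := by
    have hqZ : (0 : ℤ) < q := by exact_mod_cast hq
    rcases le_or_gt 0 (t / (q : ℤ)) with h | h
    · have h1 : (0 : ℤ) ≤ (q : ℤ) * (t / q) := mul_nonneg hqZ.le h
      have h2 : (r : ℤ) ≤ t := by linarith [htq]
      have h2R : (r : ℝ) ≤ (t : ℝ) := by exact_mod_cast h2
      calc M ≤ (r : ℝ) := min_le_left _ _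
        _ ≤ (t : ℝ) := h2R
        _ ≤ |(t : ℝ)| := le_abs_self _
    · have h1 : t / (q : ℤ) ≤ -1 := by omega
      have h2 : (q : ℤ) * (t / q) ≤ -q := by nlinarith
      have h3 : t ≤ (r : ℤ) - q := by linarith [htq]
      have h3R : (t : ℝ) ≤ (r : ℝ) - q := by exact_mod_cast h3
      calc M ≤ (q : ℝ) - r := min_le_right _ _
        _ ≤ -(t : ℝ) := by linarith
        _ ≤ |(t : ℝ)| := neg_le_abs _
  have heq : |(m : ℝ) / q - k| = |(t : ℝ)| / q := by
    rw [htdef]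
    push_cast
    rw [← abs_of_pos hqR, ← abs_div]
    congr 1
    field_simp
    simp only [abs_of_pos hqR]
    ring
  have hnid : M / q - 1 / (4 * q) ≤ nid x := by
    have key := abs_sub_abs_le_abs_sub ((m : ℝ) / q - k) ((m : ℝ) / q - x)
    have e1 : (m : ℝ) / q - k - ((m : ℝ) / q - x) = x - k := by ring
    rw [e1] at key
    have e2 : |(m : ℝ) / q - x| = |x - (m : ℝ) / q| := abs_sub_comm _ _
    have hdiv : M / q ≤ |(t : ℝ)| / q := by gcongr
    have : nid x = |x - k| := rfl
    rw [this]
    rw [heq, e2] at key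
    linarith
  have hc : M / (2 * q) ≤ nid x := by
    have h4 : M / q - 1 / (4 * q) - M / (2 * q) = (2 * M - 1) / (4 * q) := by
      field_simp
      ring
    have h5 : 0 ≤ (2 * M - 1) / (4 * q) := div_nonneg (by linarith) (by positivity)
    linarith
  have hcpos : (0 : ℝ) < M / (2 * q) := by positivity
  have hinv : (nid x)⁻¹ ≤ (M / (2 * q))⁻¹ := inv_anti₀ hcpos hc
  have hinveq : (M / (2 * q))⁻¹ = 2 * q * M⁻¹ := by
    rw [inv_div]
    ring
  have hMinv : M⁻¹ ≤ (r : ℝ)⁻¹ + ((q : ℝ) - r)⁻¹ := by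
    rcases le_total (r : ℝ) ((q : ℝ) - r) with h | h
    · rw [hM, min_eq_left h]
      have : (0 : ℝ) ≤ ((q : ℝ) - r)⁻¹ := by positivity
      linarith
    · rw [hM, min_eq_right h]
      have : (0 : ℝ) ≤ (r : ℝ)⁻¹ := by positivity
      linarith
  calc (nid x)⁻¹ ≤ 2 * q * M⁻¹ := by rw [← hinveq]; exact hinv
    _ ≤ 2 * q * ((r : ℝ)⁻¹ + ((q : ℝ) - r)⁻¹) := by
        apply mul_le_mul_of_nonneg_left hMinv (by positivity)


theorem stmt6 :
    ∃ C : ℝ, 0 < C ∧ ∀ (α : ℝ) (a : ℤ) (q D : ℕ),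
      1 ≤ q → Int.gcd a q = 1 → |α - (a : ℝ) / q| ≤ ((q : ℝ))⁻¹ ^ 2 →
      1 ≤ D → (D : ℝ) ≤ Real.sqrt q / 4 →
      ∑ d ∈ Finset.Ico D (2 * D), (nid (α * (d : ℝ) ^ 2))⁻¹
        ≤ C * q * Real.log q := by
  refine ⟨8, by norm_num, ?_⟩
  intro α a q D hq hgcd hα hD hDq
  have hqR : (0 : ℝ) < q := by exact_mod_cast hq
  have hsq4 : (4 : ℝ) ≤ Real.sqrt q := by
    have h1 : (1 : ℝ) ≤ (D : ℝ) := by exact_mod_cast hD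
    linarith
  have hq16 : (16 : ℕ) ≤ q := by
    have h : (16 : ℝ) ≤ q := by nlinarith [Real.sq_sqrt hqR.le]
    exact_mod_cast h
  set s := Finset.Ico D (2 * D) with hs
  set r : ℕ → ℕ := fun d => ((a * (d : ℤ) ^ 2) % q).toNat with hrdef
  have hqZ : (0 : ℤ) < q := by exact_mod_cast hq
  have hd2q : ∀ d ∈ s, 0 < d ^ 2 ∧ (d : ℝ) ^ 2 < q / 4 := by
    intro d hd
    rw [hs, Finset.mem_Ico] at hd
    have h1 : 1 ≤ d := le_trans hD hd.1
    refine ⟨by positivity, ?_⟩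
    have h2 : (d : ℝ) < 2 * D := by exact_mod_cast hd.2
    have h4 : (0 : ℝ) ≤ (d : ℝ) := Nat.cast_nonneg d
    nlinarith [Real.sq_sqrt hqR.le]
  have hd2q' : ∀ d ∈ s, 0 < d ^ 2 ∧ d ^ 2 < q := by
    intro d hd
    obtain ⟨h1, h2⟩ := hd2q d hd
    refine ⟨h1, ?_⟩
    have h3 : ((d ^ 2 : ℕ) : ℝ) < q := by push_cast; nlinarith
    exact_mod_cast h3
  have hgcd' : Int.gcd (q : ℤ) a = 1 := by rwa [Int.gcd_comm]
  have hqdvd : ∀ d ∈ s, ¬ ((q : ℤ) ∣ (a * (d : ℤ) ^ 2)) := by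
    intro d hd hdvd
    have h1 : (q : ℤ) ∣ ((d : ℤ) ^ 2) := Int.dvd_of_dvd_mul_right_of_gcd_one hdvd hgcd'
    have h2 : (q : ℤ) ∣ ((d ^ 2 : ℕ) : ℤ) := by push_cast; exact h1
    have h3 : q ∣ d ^ 2 := by exact_mod_cast h2
    have h4 := Nat.le_of_dvd (hd2q' d hd).1 h3
    have h5 := (hd2q' d hd).2
    omega
  have hrmod : ∀ d ∈ s, (a * (d : ℤ) ^ 2) % q = (r d : ℤ) := by
    intro d hd
    rw [hrdef]
    exact (Int.toNat_of_nonneg (Int.emod_nonneg _ hqZ.ne')).symm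
  have hrmem : ∀ d ∈ s, 1 ≤ r d ∧ r d < q := by
    intro d hd
    have h1 : (0 : ℤ) ≤ (a * (d : ℤ) ^ 2) % q := Int.emod_nonneg _ hqZ.ne'
    have h2 : (a * (d : ℤ) ^ 2) % q < q := Int.emod_lt_of_pos _ hqZ
    have h3 : (a * (d : ℤ) ^ 2) % q ≠ 0 := by
      intro h0
      exact hqdvd d hd (Int.dvd_of_emod_eq_zero h0)
    have hrd := hrmod d hd
    have hlt : (r d : ℤ) < q := by rw [← hrd]; exact h2
    have hne : r d ≠ 0 := by
      intro h0
      apply h3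
      rw [hrd, h0, Nat.cast_zero]
    exact ⟨Nat.one_le_iff_ne_zero.mpr hne, by exact_mod_cast hlt⟩
  have hinj : Set.InjOn r s := by
    intro d hd e he hre
    have hmodeq : (a * (d : ℤ) ^ 2) % q = (a * (e : ℤ) ^ 2) % q := by
      rw [hrmod d hd, hrmod e he, hre]
    have hdvd1 : (q : ℤ) ∣ (a * (e : ℤ) ^ 2 - a * (d : ℤ) ^ 2) := Int.ModEq.dvd hmodeq
    have hdvd2 : (q : ℤ) ∣ (a * ((e : ℤ) ^ 2 - (d : ℤ) ^ 2)) := by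
      have : a * ((e : ℤ) ^ 2 - (d : ℤ) ^ 2) = a * (e : ℤ) ^ 2 - a * (d : ℤ) ^ 2 := by ring
      rw [this]; exact hdvd1
    have hdvd3 : (q : ℤ) ∣ ((e : ℤ) ^ 2 - (d : ℤ) ^ 2) :=
      Int.dvd_of_dvd_mul_right_of_gcd_one hdvd2 hgcd'
    have hde : (e : ℤ) ^ 2 - (d : ℤ) ^ 2 = 0 := by
      by_contra hne
      have h1 : (q : ℤ) ≤ |(e : ℤ) ^ 2 - (d : ℤ) ^ 2| :=
        Int.le_of_dvd (abs_pos.mpr hne) ((dvd_abs _ _).mpr hdvd3)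
      have hd1 := hd2q' d hd
      have he1 := hd2q' e he
      have hd2 : ((d ^ 2 : ℕ) : ℤ) < q := by exact_mod_cast hd1.2
      have he2 : ((e ^ 2 : ℕ) : ℤ) < q := by exact_mod_cast he1.2
      have hd0 : (0 : ℤ) < ((d ^ 2 : ℕ) : ℤ) := by exact_mod_cast hd1.1
      have he0 : (0 : ℤ) < ((e ^ 2 : ℕ) : ℤ) := by exact_mod_cast he1.1
      push_cast at hd2 he2 hd0 he0
      rcases abs_cases ((e : ℤ) ^ 2 - (d : ℤ) ^ 2) with ⟨heq, _⟩ | ⟨heq, _⟩ <;>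
        rw [heq] at h1 <;> linarith
    have : (e : ℤ) ^ 2 = (d : ℤ) ^ 2 := by linarith
    have h2 : (e : ℤ) = d := by
      have h0d : (0 : ℤ) ≤ d := by positivity
      have h0e : (0 : ℤ) ≤ e := by positivity
      nlinarith
    exact_mod_cast h2.symm
  have hterm : ∀ d ∈ s, (nid (α * (d : ℝ) ^ 2))⁻¹ ≤
      2 * q * ((r d : ℝ)⁻¹ + ((q : ℝ) - r d)⁻¹) := by
    intro d hd
    have hr := hrmem d hd
    apply nid_term_bound hq hr.1 hr.2 (hrmod d hd)
    have heq : ((a * (d : ℤ) ^ 2 : ℤ) : ℝ) / q = (a : ℝ) * (d : ℝ) ^ 2 / q := by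
      push_cast; ring
    rw [heq]
    have h1 : |α * (d : ℝ) ^ 2 - (a : ℝ) * (d : ℝ) ^ 2 / q| = (d : ℝ) ^ 2 * |α - (a : ℝ) / q| := by
      have e0 : α * (d : ℝ) ^ 2 - (a : ℝ) * (d : ℝ) ^ 2 / q = (d : ℝ) ^ 2 * (α - (a : ℝ) / q) := by
        ring
      rw [e0, abs_mul, abs_of_nonneg (sq_nonneg _)]
    rw [h1]
    have h2 := (hd2q d hd).2
    have h3 : (d : ℝ) ^ 2 * |α - (a : ℝ) / q| ≤ (d : ℝ) ^ 2 * ((q : ℝ))⁻¹ ^ 2 :=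
      mul_le_mul_of_nonneg_left hα (sq_nonneg _)
    have h4 : (d : ℝ) ^ 2 * ((q : ℝ))⁻¹ ^ 2 ≤ (q / 4) * ((q : ℝ))⁻¹ ^ 2 := by
      apply mul_le_mul_of_nonneg_right h2.le (by positivity)
    have h5 : (q / 4 : ℝ) * ((q : ℝ))⁻¹ ^ 2 = 1 / (4 * q) := by
      field_simp
    linarith
  have hsum1 : ∑ d ∈ s, (nid (α * (d : ℝ) ^ 2))⁻¹ ≤
      ∑ d ∈ s, 2 * q * ((r d : ℝ)⁻¹ + ((q : ℝ) - r d)⁻¹) := Finset.sum_le_sum hterm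
  set g : ℕ → ℝ := fun mm => (mm : ℝ)⁻¹ + ((q : ℝ) - mm)⁻¹ with hg
  have hgnn : ∀ mm ∈ Finset.Ico 1 q, 0 ≤ g mm := by
    intro mm hm
    rw [Finset.mem_Ico] at hm
    have h1 : (0 : ℝ) < mm := by exact_mod_cast hm.1
    have h2 : (mm : ℝ) < q := by exact_mod_cast hm.2
    have h3 : (0 : ℝ) < (q : ℝ) - mm := by linarith
    rw [hg]
    positivity
  have himg : ∑ d ∈ s, g (r d) = ∑ mm ∈ s.image r, g mm :=
    (Finset.sum_image (fun x hx y hy h => hinj hx hy h)).symm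
  have hsub : s.image r ⊆ Finset.Ico 1 q := by
    intro mm hm
    rw [Finset.mem_image] at hm
    obtain ⟨d, hd, hdm⟩ := hm
    rw [Finset.mem_Ico, ← hdm]
    exact hrmem d hd
  have h2 : ∑ mm ∈ s.image r, g mm ≤ ∑ mm ∈ Finset.Ico 1 q, g mm :=
    Finset.sum_le_sum_of_subset_of_nonneg hsub (fun i hi _ => hgnn i hi)
  have hrefl : ∑ mm ∈ Finset.Ico 1 q, ((q : ℝ) - mm)⁻¹ = ∑ mm ∈ Finset.Ico 1 q, (mm : ℝ)⁻¹ := by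
    apply Finset.sum_nbij' (i := fun mm => q - mm) (j := fun mm => q - mm)
    · intro a ha; rw [Finset.mem_Ico] at *; omega
    · intro a ha; rw [Finset.mem_Ico] at *; omega
    · intro a ha; rw [Finset.mem_Ico] at ha; omega
    · intro a ha; rw [Finset.mem_Ico] at ha; omega
    · intro a ha
      rw [Finset.mem_Ico] at ha
      congr 1
      rw [Nat.cast_sub ha.2.le]
  have hharm : ∑ mm ∈ Finset.Ico 1 q, (mm : ℝ)⁻¹ = (harmonic (q - 1) : ℝ) := by
    rw [harmonic_eq_sum_Icc]
    push_cast
    have : Finset.Ico 1 q = Finset.Icc 1 (q - 1) := by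
      rw [← Finset.Ico_add_one_right_eq_Icc]
      congr 1
      omega
    rw [this]
  have hlog1 : (1 : ℝ) ≤ Real.log q := by
    rw [Real.le_log_iff_exp_le hqR]
    have h1 : Real.exp 1 < 2.7182818286 := Real.exp_one_lt_d9
    have h2 : (16 : ℝ) ≤ q := by exact_mod_cast hq16
    linarith
  have hHle : (harmonic (q - 1) : ℝ) ≤ 1 + Real.log q := by
    refine (harmonic_le_one_add_log _).trans ?_
    have h1 : Real.log ((q - 1 : ℕ) : ℝ) ≤ Real.log q := by
      apply Real.log_le_log (by exact_mod_cast (by omega : 0 < q - 1))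
      exact_mod_cast (by omega : q - 1 ≤ q)
    linarith
  have hgsum : ∑ mm ∈ Finset.Ico 1 q, g mm ≤ 2 * (1 + Real.log q) := by
    rw [hg]
    rw [Finset.sum_add_distrib, hrefl, hharm]
    linarith
  calc ∑ d ∈ s, (nid (α * (d : ℝ) ^ 2))⁻¹
      ≤ ∑ d ∈ s, 2 * q * g (r d) := hsum1
    _ = 2 * q * ∑ d ∈ s, g (r d) := by rw [Finset.mul_sum]
    _ ≤ 2 * q * (2 * (1 + Real.log q)) := by
        apply mul_le_mul_of_nonneg_left _ (by positivity)
        rw [himg]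
        exact h2.trans hgsum
    _ ≤ 8 * q * Real.log q := by nlinarith
end

section
/- Let q ≥ 2 and a be an integer with gcd(a, q) = 1, and let D be a positive integer with 2D ≤ q^{1/2}/2. Then Σ_{D ≤ d < 2D} ‖ad²/q‖⁻¹ ≪ q log q, where ‖·‖ denotes distance to the nearest integer. -/
lemma int_abs_lb (k : ℤ) (q r : ℕ) (hk : k % q = r) (hr1 : 1 ≤ r) (hrq : r < q) :
    ((min r (q - r) : ℕ) : ℤ) ≤ |k| := by
  obtain ⟨t, ht⟩ : (q:ℤ) ∣ k - r := Int.dvd_self_sub_of_emod_eq hk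
  rcases le_or_gt 0 t with h | h
  · have hs : 0 ≤ (q:ℤ) * t := mul_nonneg (by positivity) h
    generalize hG : (q:ℤ) * t = s at *
    rcases abs_cases k with ⟨h1, h2⟩ | ⟨h1, h2⟩ <;> omega
  · have hs : (q:ℤ) ≤ (q:ℤ) * (-t) := le_mul_of_one_le_right (by positivity) (by omega)
    have hs' : (q:ℤ) * (-t) = -((q:ℤ) * t) := by ring
    rw [hs'] at hs
    generalize hG : (q:ℤ) * t = s at *
    rcases abs_cases k with ⟨h1, h2⟩ | ⟨h1, h2⟩ <;> omega

lemma key_lb (m : ℤ) (q : ℕ) (hq : 2 ≤ q) (r : ℕ) (hr : m % q = r)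
    (hr1 : 1 ≤ r) (hrq : r < q) :
    (nid ((m : ℝ) / q))⁻¹ ≤ q / r + q / ((q - r : ℕ) : ℝ) := by
  have hq0 : (0:ℝ) < q := by positivity
  set n := round ((m : ℝ) / q) with hn
  have hk : (m - n * q) % q = (r : ℤ) := by
    rw [Int.sub_emod, Int.mul_emod_left, Int.sub_zero, Int.emod_emod_of_dvd _ dvd_rfl, hr]
  have habs := int_abs_lb (m - n * q) q r hk hr1 hrq
  have hmin1 : 1 ≤ min r (q - r) := by omega
  have hmin0 : (0:ℝ) < ((min r (q - r) : ℕ) : ℝ) := by exact_mod_cast hmin1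
  have h1 : ((min r (q - r) : ℕ) : ℝ) / q ≤ nid ((m : ℝ) / q) := by
    rw [nid]
    have heq : (m : ℝ) / q - n = ((m - n * q : ℤ) : ℝ) / q := by
      push_cast; field_simp
    rw [heq, abs_div, abs_of_pos hq0]
    gcongr
    calc ((min r (q - r) : ℕ) : ℝ) ≤ ((|m - n * q| : ℤ) : ℝ) := by exact_mod_cast habs
      _ = |((m - n * q : ℤ) : ℝ)| := by push_cast; simp
  have h2 : (nid ((m : ℝ) / q))⁻¹ ≤ (q : ℝ) / ((min r (q - r) : ℕ) : ℝ) := by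
    rw [div_eq_mul_inv]
    calc (nid ((m : ℝ) / q))⁻¹ ≤ (((min r (q - r) : ℕ) : ℝ) / q)⁻¹ :=
          inv_anti₀ (by positivity) h1
      _ = (q : ℝ) * ((min r (q - r) : ℕ) : ℝ)⁻¹ := by
          rw [inv_div]; ring
  refine h2.trans ?_
  rcases Nat.le_total r (q - r) with h | h
  · rw [min_eq_left h]
    have : (0:ℝ) ≤ q / ((q - r : ℕ) : ℝ) := by positivity
    linarith
  · rw [min_eq_right h]
    have : (0:ℝ) ≤ (q:ℝ) / r := by positivity
    linarith

lemma reflect_sum (q : ℕ) :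
    ∑ s ∈ Finset.Ico 1 q, (((q - s : ℕ)):ℝ)⁻¹ = ∑ s ∈ Finset.Ico 1 q, ((s:ℕ):ℝ)⁻¹ := by
  apply Finset.sum_nbij' (i := fun s => q - s) (j := fun s => q - s) <;>
      simp only [Finset.mem_Ico] <;> intro a ha
  · omega
  · omega
  · omega
  · omega
  · trivial

lemma harmonic_sum (q : ℕ) (hq : 2 ≤ q) :
    ∑ s ∈ Finset.Ico 1 q, ((s:ℕ):ℝ)⁻¹ = (harmonic (q-1) : ℝ) := by
  have : Finset.Ico 1 q = Finset.Icc 1 (q-1) := by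
    rw [← Finset.Ico_add_one_right_eq_Icc]; congr 1; omega
  rw [this, harmonic_eq_sum_Icc]
  push_cast
  rfl

theorem stmt15 :
    ∃ C : ℝ, 0 < C ∧ ∀ (a : ℤ) (q D : ℕ),
      2 ≤ q → Int.gcd a q = 1 → 1 ≤ D → (2 * D : ℝ) ≤ Real.sqrt q / 2 →
      ∑ d ∈ Finset.Ico D (2 * D), (nid ((a : ℝ) * (d : ℝ) ^ 2 / q))⁻¹
        ≤ C * q * Real.log q := by
  refine ⟨10, by norm_num, fun a q D hq hgcd hD hDq => ?_⟩
  have hq0 : (0:ℝ) < q := by positivity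
  have hqZ : (0:ℤ) < q := by exact_mod_cast (by omega : 0 < q)
  -- d² < q for d in range
  have hd2 : ∀ d ∈ Finset.Ico D (2 * D), d ^ 2 < q := by
    intro d hd
    rw [Finset.mem_Ico] at hd
    have h1 : (d : ℝ) < 2 * D := by exact_mod_cast hd.2
    have h2 : (d : ℝ) ^ 2 < (Real.sqrt q / 2) ^ 2 := by
      have hd0 : (0:ℝ) ≤ (d:ℝ) := by positivity
      have := lt_of_lt_of_le h1 hDq
      nlinarith
    have h3 : (Real.sqrt q / 2) ^ 2 = q / 4 := by
      rw [div_pow, Real.sq_sqrt hq0.le]; norm_num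
    have h4 : (d:ℝ) ^ 2 < (q:ℝ) := by
      rw [h3] at h2; linarith
    exact_mod_cast h4
  -- the residue map
  set r : ℕ → ℕ := fun d => ((a * (d:ℤ) ^ 2) % q).toNat with hrdef
  have hrspec : ∀ d ∈ Finset.Ico D (2 * D),
      (a * (d:ℤ) ^ 2) % q = (r d : ℤ) ∧ 1 ≤ r d ∧ r d < q := by
    intro d hd
    have hmem := hd
    rw [Finset.mem_Ico] at hmem
    have hnn : 0 ≤ (a * (d:ℤ) ^ 2) % q := Int.emod_nonneg _ (by omega)
    have hlt : (a * (d:ℤ) ^ 2) % q < q := Int.emod_lt_of_pos _ hqZ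
    have hne : (a * (d:ℤ) ^ 2) % q ≠ 0 := by
      intro h0
      have hdvd : (q:ℤ) ∣ a * (d:ℤ) ^ 2 := Int.dvd_of_emod_eq_zero h0
      have hcop : IsCoprime (q:ℤ) a := by
        rw [Int.isCoprime_iff_gcd_eq_one, Int.gcd_comm]
        exact hgcd
      have hdvd2 : (q:ℤ) ∣ (d:ℤ) ^ 2 := hcop.dvd_of_dvd_mul_left hdvd
      have hdvd3 : q ∣ d ^ 2 := by exact_mod_cast hdvd2
      have hlt' : d ^ 2 < q := hd2 d hd
      have hd1 : 1 ≤ d := le_trans hD hmem.1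
      have h1d : 1 ≤ d ^ 2 := Nat.one_le_pow _ _ (by omega)
      have hle : q ≤ d ^ 2 := Nat.le_of_dvd (by omega) hdvd3
      omega
    have htn : ((a * (d:ℤ) ^ 2 % q).toNat : ℤ) = a * (d:ℤ) ^ 2 % q :=
      Int.toNat_of_nonneg hnn
    refine ⟨?_, ?_, ?_⟩ <;> simp only [hrdef] <;> omega
  -- pointwise bound
  have step1 : ∑ d ∈ Finset.Ico D (2 * D), (nid ((a : ℝ) * (d : ℝ) ^ 2 / q))⁻¹
      ≤ ∑ d ∈ Finset.Ico D (2 * D), ((q:ℝ) / (r d) + q / ((q - r d : ℕ) : ℝ)) := by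
    apply Finset.sum_le_sum
    intro d hd
    obtain ⟨h1, h2, h3⟩ := hrspec d hd
    have hcast : (a : ℝ) * (d : ℝ) ^ 2 = ((a * (d:ℤ) ^ 2 : ℤ) : ℝ) := by push_cast; ring
    rw [hcast]
    exact key_lb _ q hq (r d) h1 h2 h3
  -- injectivity
  have hinj : ∀ d₁ ∈ Finset.Ico D (2 * D), ∀ d₂ ∈ Finset.Ico D (2 * D),
      r d₁ = r d₂ → d₁ = d₂ := by
    intro d₁ h₁ d₂ h₂ hr12
    have e1 := (hrspec d₁ h₁).1
    have e2 := (hrspec d₂ h₂).1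
    have hmod : (a * (d₁:ℤ) ^ 2) % q = (a * (d₂:ℤ) ^ 2) % q := by rw [e1, e2, hr12]
    have hdvd : (q:ℤ) ∣ a * (d₁:ℤ) ^ 2 - a * (d₂:ℤ) ^ 2 := by
      exact dvd_sub_comm.mp
        (Int.ModEq.dvd (hmod : Int.ModEq q (a * (d₁:ℤ) ^ 2) (a * (d₂:ℤ) ^ 2)))
    have hfac : a * (d₁:ℤ) ^ 2 - a * (d₂:ℤ) ^ 2 = a * ((d₁:ℤ) ^ 2 - (d₂:ℤ) ^ 2) := by ring
    rw [hfac] at hdvd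
    have hcop : IsCoprime (q:ℤ) a := by
      rw [Int.isCoprime_iff_gcd_eq_one, Int.gcd_comm]; exact hgcd
    have hdvd2 : (q:ℤ) ∣ (d₁:ℤ) ^ 2 - (d₂:ℤ) ^ 2 := hcop.dvd_of_dvd_mul_left hdvd
    have hb1 : d₁ ^ 2 < q := hd2 d₁ h₁
    have hb2 : d₂ ^ 2 < q := hd2 d₂ h₂
    have habs : |(d₁:ℤ) ^ 2 - (d₂:ℤ) ^ 2| < q := by
      rcases abs_cases ((d₁:ℤ) ^ 2 - (d₂:ℤ) ^ 2) with ⟨h, _⟩ | ⟨h, _⟩ <;>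
        · rw [h]
          have c1 : ((d₁ ^ 2 : ℕ) : ℤ) < q := by exact_mod_cast hb1
          have c2 : ((d₂ ^ 2 : ℕ) : ℤ) < q := by exact_mod_cast hb2
          have c3 : (0:ℤ) ≤ ((d₁ ^ 2 : ℕ) : ℤ) := by positivity
          have c4 : (0:ℤ) ≤ ((d₂ ^ 2 : ℕ) : ℤ) := by positivity
          push_cast at c1 c2 c3 c4 ⊢
          linarith
    have hzero : (d₁:ℤ) ^ 2 - (d₂:ℤ) ^ 2 = 0 := Int.eq_zero_of_abs_lt_dvd hdvd2 habs
    have : (d₁:ℤ) ^ 2 = (d₂:ℤ) ^ 2 := by linarith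
    have : d₁ ^ 2 = d₂ ^ 2 := by exact_mod_cast this
    exact Nat.pow_left_injective (by norm_num) this
  -- image and sum over residues
  have himg : (Finset.Ico D (2 * D)).image r ⊆ Finset.Ico 1 q := by
    intro s hs
    rw [Finset.mem_image] at hs
    obtain ⟨d, hd, rfl⟩ := hs
    rw [Finset.mem_Ico]
    exact ⟨(hrspec d hd).2.1, (hrspec d hd).2.2⟩
  have step2 : ∑ d ∈ Finset.Ico D (2 * D), ((q:ℝ) / (r d) + q / ((q - r d : ℕ) : ℝ))
      ≤ ∑ s ∈ Finset.Ico 1 q, ((q:ℝ) / s + q / ((q - s : ℕ) : ℝ)) := by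
    rw [← Finset.sum_image (f := fun s : ℕ => (q:ℝ) / s + q / ((q - s : ℕ) : ℝ)) hinj]
    apply Finset.sum_le_sum_of_subset_of_nonneg himg
    intro s _ _
    positivity
  -- evaluate the harmonic sum
  have step3 : ∑ s ∈ Finset.Ico 1 q, ((q:ℝ) / s + q / ((q - s : ℕ) : ℝ))
      = 2 * q * (harmonic (q-1) : ℝ) := by
    rw [Finset.sum_add_distrib]
    simp only [div_eq_mul_inv]
    rw [← Finset.mul_sum, ← Finset.mul_sum, reflect_sum q, harmonic_sum q hq]
    ring
  -- log bounds
  have hlog2 : (0.6931471803 : ℝ) < Real.log 2 := Real.log_two_gt_d9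
  have hlogq : Real.log 2 ≤ Real.log q := by
    apply Real.log_le_log (by norm_num)
    exact_mod_cast hq
  have hlogq1 : Real.log (q - 1 : ℕ) ≤ Real.log q := by
    apply Real.log_le_log
    · have : 1 ≤ q - 1 := by omega
      exact_mod_cast (by omega : 0 < q - 1)
    · exact_mod_cast (by omega : q - 1 ≤ q)
  have hharm : (harmonic (q-1) : ℝ) ≤ 1 + Real.log q :=
    le_trans (harmonic_le_one_add_log (q-1)) (by linarith)
  have hfin : 2 * (q:ℝ) * (harmonic (q-1) : ℝ) ≤ 10 * q * Real.log q := by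
    have h1 : (1:ℝ) ≤ 2 * Real.log q := by linarith
    have h2 : (harmonic (q-1) : ℝ) ≤ 3 * Real.log q := by linarith
    nlinarith [hq0, Real.log_nonneg (by exact_mod_cast (by omega : 1 ≤ q) : (1:ℝ) ≤ q)]
  calc ∑ d ∈ Finset.Ico D (2 * D), (nid ((a : ℝ) * (d : ℝ) ^ 2 / q))⁻¹
      ≤ ∑ d ∈ Finset.Ico D (2 * D), ((q:ℝ) / (r d) + q / ((q - r d : ℕ) : ℝ)) := step1
    _ ≤ ∑ s ∈ Finset.Ico 1 q, ((q:ℝ) / s + q / ((q - s : ℕ) : ℝ)) := step2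
    _ = 2 * q * (harmonic (q-1) : ℝ) := step3
    _ ≤ 10 * q * Real.log q := hfin
end
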